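/- arXiv:1208.2631 — 3 statements merged into one kernel-verified Lean document; each statement's English description precedes it below -/
import Mathlib

section
/- Let A and B be Heyting algebras, A + B their concatenation (top of A glued to bottom of B), C a Heyting algebra, and let f : A → C and g : B → C be Heyting homomorphisms such that f(⊤_A) = g(⊥_B), f(a) ≤ f(⊤_A) for all a ∈ A, and g(⊥_B) ≤ g(b) for all b ∈ B. Then the map h : A + B → C defined by h(x) = f(x) for x ∈ A and h(x) = g(x) for x ∈ B is a Heyting homomorphism (preserving ⊓, ⊔, ⇨, ⊥, ⊤). -/
/-- `iA : A → S`, `iB : B → S` realize `S` as the concatenation `A + B` of the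
Heyting algebras `A` and `B` (top of `A` glued to bottom of `B`). -/
def IsConcat {A B S : Type*} [HeytingAlgebra A] [HeytingAlgebra B] [HeytingAlgebra S]
    (iA : A → S) (iB : B → S) : Prop :=
  Function.Injective iA ∧ Function.Injective iB ∧
  (∀ x y : A, iA (x ⊓ y) = iA x ⊓ iA y) ∧ (∀ x y : A, iA (x ⊔ y) = iA x ⊔ iA y) ∧
  iA ⊥ = ⊥ ∧
  (∀ x y : B, iB (x ⊓ y) = iB x ⊓ iB y) ∧ (∀ x y : B, iB (x ⊔ y) = iB x ⊔ iB y) ∧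
  (∀ x y : B, iB (x ⇨ y) = iB x ⇨ iB y) ∧ iB ⊤ = ⊤ ∧
  iA ⊤ = iB ⊥ ∧ (∀ (a : A) (b : B), iA a ≤ iB b) ∧
  (Set.range iA ∪ Set.range iB = Set.univ)

/-- Gluing homomorphisms along a concatenation: if `f : A → C` and `g : B → C`
are Heyting homomorphisms with `f ⊤ = g ⊥`, `f a ≤ f ⊤` and `g ⊥ ≤ g b`, then the
piecewise map `h : A + B → C` (given by `f` on `A` and `g` on `B`) is a Heyting
homomorphism preserving `⊓, ⊔, ⇨, ⊥, ⊤`. -/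
theorem stmt_12 {A B S C : Type*} [HeytingAlgebra A] [HeytingAlgebra B]
    [HeytingAlgebra S] [HeytingAlgebra C]
    (iA : A → S) (iB : B → S) (hS : IsConcat iA iB)
    (f : A → C) (g : B → C)
    (hfinf : ∀ x y : A, f (x ⊓ y) = f x ⊓ f y) (hfsup : ∀ x y : A, f (x ⊔ y) = f x ⊔ f y)
    (hfhimp : ∀ x y : A, f (x ⇨ y) = f x ⇨ f y) (hfbot : f ⊥ = ⊥) (hftop : f ⊤ = g ⊥)
    (hginf : ∀ x y : B, g (x ⊓ y) = g x ⊓ g y) (hgsup : ∀ x y : B, g (x ⊔ y) = g x ⊔ g y)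
    (hghimp : ∀ x y : B, g (x ⇨ y) = g x ⇨ g y)
    (hfle : ∀ a : A, f a ≤ f ⊤) (hgle : ∀ b : B, g ⊥ ≤ g b) :
    ∃ h : S → C,
      (∀ a : A, h (iA a) = f a) ∧ (∀ b : B, h (iB b) = g b) ∧
      (∀ x y : S, h (x ⊓ y) = h x ⊓ h y) ∧ (∀ x y : S, h (x ⊔ y) = h x ⊔ h y) ∧
      (∀ x y : S, h (x ⇨ y) = h x ⇨ h y) ∧ h ⊥ = ⊥ ∧ h ⊤ = ⊤ := by
  classical
  obtain ⟨hiAinj, hiBinj, hiAinf, hiAsup, hiAbot, hiBinf, hiBsup, hiBhimp, hiBtop,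
    hglue, hAB, hcover⟩ := hS
  have cover : ∀ x : S, (∃ a, iA a = x) ∨ (∃ b, iB b = x) := by
    intro x
    have hx : x ∈ Set.range iA ∪ Set.range iB := by rw [hcover]; trivial
    exact hx
  have leA : ∀ {x y : A}, iA x ≤ iA y ↔ x ≤ y := by
    intro x y
    constructor
    · intro hxy
      have h1 : iA (x ⊓ y) = iA x := by rw [hiAinf]; exact inf_eq_left.mpr hxy
      exact inf_eq_left.mp (hiAinj h1)
    · intro hxy
      have h1 : iA (x ⊓ y) = iA x := congrArg iA (inf_eq_left.mpr hxy)
      rw [hiAinf] at h1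
      rw [← h1]; exact inf_le_right
  have leB : ∀ {x y : B}, iB x ≤ iB y ↔ x ≤ y := by
    intro x y
    constructor
    · intro hxy
      have h1 : iB (x ⊓ y) = iB x := by rw [hiBinf]; exact inf_eq_left.mpr hxy
      exact inf_eq_left.mp (hiBinj h1)
    · intro hxy
      have h1 : iB (x ⊓ y) = iB x := congrArg iB (inf_eq_left.mpr hxy)
      rw [hiBinf] at h1
      rw [← h1]; exact inf_le_right
  have glueAB : ∀ {a : A} {b : B}, iA a = iB b → a = ⊤ ∧ b = ⊥ := by
    intro a b hab
    have h1 : iA a ≤ iA ⊤ := by rw [hglue]; exact hAB a ⊥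
    have h2 : iA ⊤ ≤ iA a := by rw [hglue, hab]; exact leB.mpr bot_le
    have ha : a = ⊤ := le_antisymm (leA.mp h1) (leA.mp h2)
    have hb : iB b = iB ⊥ := by rw [← hab, ha, hglue]
    exact ⟨ha, hiBinj hb⟩
  have gtop : g ⊤ = ⊤ := by
    have h1 : g ((⊥ : B) ⇨ ⊥) = g ⊥ ⇨ g ⊥ := hghimp ⊥ ⊥
    rwa [himp_self, himp_self] at h1
  have fmono : ∀ {x y : A}, x ≤ y → f x ≤ f y := by
    intro x y hxy
    have h1 : f (x ⊓ y) = f x := congrArg f (inf_eq_left.mpr hxy)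
    rw [hfinf] at h1
    rw [← h1]; exact inf_le_right
  have faleg : ∀ (a : A) (b : B), f a ≤ g b := fun a b =>
    (hfle a).trans (hftop ▸ hgle b)
  let h : S → C := fun x =>
    if hx : ∃ a, iA a = x then f hx.choose
    else g ((cover x).resolve_left hx).choose
  have hA : ∀ a, h (iA a) = f a := by
    intro a
    have hx : ∃ a', iA a' = iA a := ⟨a, rfl⟩
    simp only [h, dif_pos hx]
    exact congrArg f (hiAinj hx.choose_spec)
  have hB : ∀ b, h (iB b) = g b := by
    intro b
    by_cases hx : ∃ a, iA a = iB b
    · simp only [h, dif_pos hx]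
      obtain ⟨ha, hb⟩ := glueAB hx.choose_spec
      rw [ha, hftop, hb]
    · simp only [h, dif_neg hx]
      exact congrArg g (hiBinj ((cover (iB b)).resolve_left hx).choose_spec)
  have htop : h ⊤ = ⊤ := by rw [← hiBtop, hB, gtop]
  refine ⟨h, hA, hB, ?_, ?_, ?_, ?_, htop⟩
  · intro x y
    rcases cover x with ⟨a, rfl⟩ | ⟨b, rfl⟩ <;> rcases cover y with ⟨a', rfl⟩ | ⟨b', rfl⟩
    · rw [← hiAinf, hA, hA, hA, hfinf]
    · rw [inf_eq_left.mpr (hAB a b'), hA, hB]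
      exact (inf_eq_left.mpr (faleg a b')).symm
    · rw [inf_eq_right.mpr (hAB a' b), hA, hB]
      exact (inf_eq_right.mpr (faleg a' b)).symm
    · rw [← hiBinf, hB, hB, hB, hginf]
  · intro x y
    rcases cover x with ⟨a, rfl⟩ | ⟨b, rfl⟩ <;> rcases cover y with ⟨a', rfl⟩ | ⟨b', rfl⟩
    · rw [← hiAsup, hA, hA, hA, hfsup]
    · rw [sup_eq_right.mpr (hAB a b'), hA, hB]
      exact (sup_eq_right.mpr (faleg a b')).symm
    · rw [sup_eq_left.mpr (hAB a' b), hA, hB]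
      exact (sup_eq_left.mpr (faleg a' b)).symm
    · rw [← hiBsup, hB, hB, hB, hgsup]
  · intro x y
    rcases cover x with ⟨a, rfl⟩ | ⟨b, rfl⟩ <;> rcases cover y with ⟨a', rfl⟩ | ⟨b', rfl⟩
    · -- iA a ⇨ iA a'
      rcases cover (iA a ⇨ iA a') with ⟨a'', hc⟩ | ⟨b'', hc⟩
      · have h1 : a'' ⊓ a ≤ a' := by
          have h2 : iA a'' ⊓ iA a ≤ iA a' := hc ▸ himp_inf_le
          rw [← hiAinf] at h2
          exact leA.mp h2
        have h2 : a ⇨ a' ≤ a'' := by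
          have h3 : iA (a ⇨ a') ≤ iA a ⇨ iA a' :=
            le_himp_iff.mpr (by rw [← hiAinf]; exact leA.mpr himp_inf_le)
          rw [← hc] at h3
          exact leA.mp h3
        have h4 : a'' = a ⇨ a' := le_antisymm (le_himp_iff.mpr h1) h2
        rw [← hc, hA, h4, hfhimp, hA, hA]
      · have h1 : iA a ≤ iA a' := by
          have h2 : iA a ≤ iA a ⇨ iA a' := hc ▸ hAB a b''
          calc iA a = iA a ⊓ (iA a ⇨ iA a') := (inf_eq_left.mpr h2).symm
            _ = (iA a ⇨ iA a') ⊓ iA a := inf_comm _ _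
            _ ≤ iA a' := himp_inf_le
        rw [himp_eq_top_iff.mpr h1, htop, hA, hA]
        exact (himp_eq_top_iff.mpr (fmono (leA.mp h1))).symm
    · -- iA a ⇨ iB b'
      rw [himp_eq_top_iff.mpr (hAB a b'), htop, hA, hB]
      exact (himp_eq_top_iff.mpr (faleg a b')).symm
    · -- iB b ⇨ iA a'
      have key : g b ⇨ f a' = f a' := by
        refine le_antisymm ?_ le_himp
        calc g b ⇨ f a' ≤ g ⊥ ⇨ f a' := himp_le_himp_right (hgle b)
          _ = f ⊤ ⇨ f a' := by rw [hftop]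
          _ = f (⊤ ⇨ a') := (hfhimp ⊤ a').symm
          _ = f a' := by rw [top_himp]
      rcases cover (iB b ⇨ iA a') with ⟨a''', hc⟩ | ⟨b''', hc⟩
      · have h1 : iA a''' ≤ iA a' := by
          have h2 : iA a''' ⊓ iB b ≤ iA a' := hc ▸ himp_inf_le
          rwa [inf_eq_left.mpr (hAB a''' b)] at h2
        have h2 : iA a' ≤ iA a''' := by
          have h3 : iA a' ≤ iB b ⇨ iA a' :=
            le_himp_iff.mpr (by rw [inf_eq_left.mpr (hAB a' b)])
          rw [← hc] at h3; exact h3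
        have h4 : iA a''' = iA a' := le_antisymm h1 h2
        rw [← hc, h4, hA, hB, key]
      · have h1 : iB (b''' ⊓ b) ≤ iA a' := by
          rw [hiBinf]; exact hc ▸ himp_inf_le
        have h2 : iA a' ≤ iB (b''' ⊓ b) := hAB a' (b''' ⊓ b)
        obtain ⟨ha, hb⟩ := glueAB (le_antisymm h2 h1)
        have h3 : b''' ≤ b ⇨ ⊥ := le_himp_iff.mpr hb.le
        have h4 : b ⇨ ⊥ ≤ b''' := by
          have h5 : iB (b ⇨ ⊥) ≤ iB b ⇨ iA a' := by
            refine le_himp_iff.mpr ?_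
            rw [← hiBinf]
            have h6 : (b ⇨ ⊥) ⊓ b = ⊥ := le_bot_iff.mp himp_inf_le
            rw [h6, ← hglue, ha]
          rw [← hc] at h5
          exact leB.mp h5
        have h7 : b''' = b ⇨ ⊥ := le_antisymm h3 h4
        rw [← hc, h7, hB, hghimp, hB, hA, ha, hftop]
    · rw [← hiBhimp, hB, hB, hB, hghimp]
  · rw [← hiAbot, hA, hfbot]
end

section
/- Let A and B be Heyting algebras and ∇ ⊆ B a filter of B, viewed also as a filter of the concatenation A + B. Then the quotient (A + B)/∇ is isomorphic as a Heyting algebra to A + (B/∇). -/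
/-- An injective inf-preserving map reflects and preserves order. -/
lemma le_iff_of_inj_inf {X Y : Type*} [SemilatticeInf X] [SemilatticeInf Y] {f : X → Y}
    (hinj : Function.Injective f) (hinf : ∀ x y, f (x ⊓ y) = f x ⊓ f y) :
    ∀ x y : X, f x ≤ f y ↔ x ≤ y := by
  intro x y
  constructor
  · intro h
    have h1 : f (x ⊓ y) = f x := by rw [hinf]; exact inf_eq_left.2 h
    exact inf_eq_left.1 (hinj h1)
  · intro h
    calc f x = f (x ⊓ y) := by rw [inf_eq_left.2 h]
    _ = f x ⊓ f y := hinf x y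
    _ ≤ f y := inf_le_right

/-- If `S = A + B` is a concatenation of Heyting algebras, `F` is a filter of `B`,
`πB : B → QB` is the quotient of `B` by `F` (a surjective Heyting homomorphism whose
kernel is `F`), `πS : S → Q` is the quotient of `S` by the filter generated by `F`
(the upward closure of the image of `F`), and `T = A + QB` is a concatenation, then
`Q = (A + B)/∇` and `T = A + (B/∇)` are isomorphic Heyting algebras. -/
theorem stmt_13 {A B S QB Q T : Type*} [HeytingAlgebra A] [HeytingAlgebra B]
    [HeytingAlgebra S] [HeytingAlgebra QB] [HeytingAlgebra Q] [HeytingAlgebra T]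
    (iA : A → S) (iB : B → S) (hS : IsConcat iA iB)
    (F : Set B) (hFtop : ⊤ ∈ F) (hFup : ∀ x ∈ F, ∀ y : B, x ≤ y → y ∈ F)
    (hFinf : ∀ x ∈ F, ∀ y ∈ F, x ⊓ y ∈ F)
    (πB : HeytingHom B QB) (hπBsurj : Function.Surjective πB)
    (hπBker : ∀ b : B, πB b = ⊤ ↔ b ∈ F)
    (πS : HeytingHom S Q) (hπSsurj : Function.Surjective πS)
    (hπSker : ∀ s : S, πS s = ⊤ ↔ ∃ b ∈ F, iB b ≤ s)
    (jA : A → T) (jB : QB → T) (hT : IsConcat jA jB) :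
    Nonempty (Q ≃o T) := by
  classical
  obtain ⟨iAinj, iBinj, iAinf, iAsup, iAbot, iBinf, iBsup, iBhimp, iBtop, iglue, iAB, icover⟩ := hS
  obtain ⟨jAinj, jBinj, jAinf, jAsup, jAbot, jBinf, jBsup, jBhimp, jBtop, jglue, jAB, jcover⟩ := hT
  have iAle := le_iff_of_inj_inf iAinj iAinf
  have iBle := le_iff_of_inj_inf iBinj iBinf
  have jAle := le_iff_of_inj_inf jAinj jAinf
  have jBle := le_iff_of_inj_inf jBinj jBinf
  -- cross order facts
  have iBA : ∀ (b : B) (a : A), iB b ≤ iA a ↔ b = ⊥ ∧ a = ⊤ := by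
    intro b a
    constructor
    · intro h
      have h1 : iB b ≤ iB ⊥ := by
        calc iB b ≤ iA a := h
        _ ≤ iA ⊤ := (iAle a ⊤).2 le_top
        _ = iB ⊥ := iglue
      have hb : b = ⊥ := le_bot_iff.1 ((iBle b ⊥).1 h1)
      have h2 : iA ⊤ ≤ iA a := by
        calc iA ⊤ = iB ⊥ := iglue
        _ = iB b := by rw [hb]
        _ ≤ iA a := h
      exact ⟨hb, top_le_iff.1 ((iAle ⊤ a).1 h2)⟩
    · rintro ⟨rfl, rfl⟩
      exact le_of_eq iglue.symm
  have jBA : ∀ (q : QB) (a : A), jB q ≤ jA a ↔ q = ⊥ ∧ a = ⊤ := by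
    intro q a
    constructor
    · intro h
      have h1 : jB q ≤ jB ⊥ := by
        calc jB q ≤ jA a := h
        _ ≤ jA ⊤ := (jAle a ⊤).2 le_top
        _ = jB ⊥ := jglue
      have hq : q = ⊥ := le_bot_iff.1 ((jBle q ⊥).1 h1)
      have h2 : jA ⊤ ≤ jA a := by
        calc jA ⊤ = jB ⊥ := jglue
        _ = jB q := by rw [hq]
        _ ≤ jA a := h
      exact ⟨hq, top_le_iff.1 ((jAle ⊤ a).1 h2)⟩
    · rintro ⟨rfl, rfl⟩
      exact le_of_eq jglue.symm
  -- covering of S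
  have cover : ∀ s : S, (∃ a, iA a = s) ∨ (∃ b, iB b = s) := by
    intro s
    have hs : s ∈ Set.range iA ∪ Set.range iB := by rw [icover]; trivial
    rcases hs with h | h
    · exact Or.inl h
    · exact Or.inr h
  -- the map φ : S → T
  set φ : S → T := fun s =>
    if h : ∃ a, iA a = s then jA h.choose
    else jB (πB ((cover s).resolve_left h).choose) with hφ
  have φA : ∀ a : A, φ (iA a) = jA a := by
    intro a
    have h : ∃ a', iA a' = iA a := ⟨a, rfl⟩
    rw [hφ]
    simp only [dif_pos h]
    exact congrArg jA (iAinj h.choose_spec)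
  have φB : ∀ b : B, φ (iB b) = jB (πB b) := by
    intro b
    rw [hφ]
    by_cases h : ∃ a, iA a = iB b
    · simp only [dif_pos h]
      have hch : iA h.choose = iB b := h.choose_spec
      obtain ⟨hb, ha⟩ := (iBA b h.choose).1 (le_of_eq hch.symm)
      rw [ha, hb, map_bot]
      exact jglue
    · simp only [dif_neg h]
      have hch := ((cover (iB b)).resolve_left h).choose_spec
      rw [iBinj hch]
  -- reformulation of the order on Q
  have πle : ∀ s s' : S, πS s ≤ πS s' ↔ ∃ c ∈ F, iB c ⊓ s ≤ s' := by
    intro s s'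
    rw [← himp_eq_top_iff, ← map_himp, hπSker]
    constructor
    · rintro ⟨c, hc, h⟩
      exact ⟨c, hc, le_himp_iff.1 h⟩
    · rintro ⟨c, hc, h⟩
      exact ⟨c, hc, le_himp_iff.2 h⟩
  have πBle : ∀ b b' : B, πB b ≤ πB b' ↔ b ⇨ b' ∈ F := by
    intro b b'
    rw [← himp_eq_top_iff, ← map_himp, hπBker]
  -- the key order equivalence
  have key : ∀ s s' : S, πS s ≤ πS s' ↔ φ s ≤ φ s' := by
    intro s s'
    rcases cover s with ⟨a, rfl⟩ | ⟨b, rfl⟩ <;> rcases cover s' with ⟨a', rfl⟩ | ⟨b', rfl⟩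
    · -- A, A
      rw [φA, φA, πle, jAle, ← iAle]
      constructor
      · rintro ⟨c, hc, h⟩
        calc iA a = iB c ⊓ iA a := (inf_eq_right.2 (iAB a c)).symm
        _ ≤ iA a' := h
      · intro h
        exact ⟨⊤, hFtop, by rw [inf_eq_right.2 (iAB a ⊤)]; exact h⟩
    · -- A, B
      rw [φA, φB, πle]
      constructor
      · intro _; exact jAB a (πB b')
      · intro _
        exact ⟨⊤, hFtop, by rw [inf_eq_right.2 (iAB a ⊤)]; exact iAB a b'⟩
    · -- B, A
      rw [φB, φA, πle, jBA]
      constructor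
      · rintro ⟨c, hc, h⟩
        rw [← iBinf] at h
        obtain ⟨h1, h2⟩ := (iBA (c ⊓ b) a').1 h
        refine ⟨?_, h2⟩
        have hπc : πB c = ⊤ := (hπBker c).2 hc
        have : πB (c ⊓ b) = ⊥ := by rw [h1, map_bot]
        rw [map_inf, hπc, top_inf_eq] at this
        exact this
      · rintro ⟨hb, rfl⟩
        refine ⟨b ⇨ ⊥, ?_, ?_⟩
        · exact (hπBker _).1 (by rw [map_himp, hb, map_bot, himp_self])
        · have h1 : (b ⇨ ⊥) ⊓ b = ⊥ := le_bot_iff.1 himp_inf_le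
          rw [← iBinf, h1]
          exact le_of_eq iglue.symm
    · -- B, B
      rw [φB, φB, πle, jBle, πBle]
      constructor
      · rintro ⟨c, hc, h⟩
        rw [← iBinf, iBle] at h
        exact hFup c hc _ (le_himp_iff.2 h)
      · intro h
        exact ⟨b ⇨ b', h, by rw [← iBinf]; exact (iBle _ _).2 himp_inf_le⟩
  -- the induced map e : Q → T
  set e : Q → T := fun q => φ (hπSsurj q).choose with he
  have eπ : ∀ s : S, e (πS s) = φ s := by
    intro s
    have hsp : πS (hπSsurj (πS s)).choose = πS s := (hπSsurj (πS s)).choose_spec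
    exact le_antisymm ((key _ _).1 hsp.le) ((key _ _).1 hsp.ge)
  have erel : ∀ q q' : Q, e q ≤ e q' ↔ q ≤ q' := by
    intro q q'
    obtain ⟨s, rfl⟩ := hπSsurj q
    obtain ⟨s', rfl⟩ := hπSsurj q'
    rw [eπ, eπ]
    exact (key s s').symm
  have einj : Function.Injective e := by
    intro q q' h
    exact le_antisymm ((erel q q').1 h.le) ((erel q' q).1 h.ge)
  have esurj : Function.Surjective e := by
    intro t
    have ht : t ∈ Set.range jA ∪ Set.range jB := by rw [jcover]; trivial
    rcases ht with ⟨a, rfl⟩ | ⟨p, rfl⟩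
    · exact ⟨πS (iA a), by rw [eπ, φA]⟩
    · obtain ⟨b, rfl⟩ := hπBsurj p
      exact ⟨πS (iB b), by rw [eπ, φB]⟩
  exact ⟨⟨Equiv.ofBijective e ⟨einj, esurj⟩, fun {q q'} => erel q q'⟩⟩
end

section
/- The relation A ≤ B defined on Heyting algebras by 'A embeds into some quotient of B' (i.e. there is a surjective Heyting homomorphism B → C and an injective Heyting homomorphism A → C for some Heyting algebra C) is transitive. -/
open scoped symmDiff

section Aux

variable {α : Type*} [HeytingAlgebra α]

private lemma le_bihimp_iff' {a b c : α} : a ≤ b ⇔ c ↔ a ⊓ b ≤ c ∧ a ⊓ c ≤ b := by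
  rw [le_bihimp_iff, inf_comm c a, inf_comm b a, and_comm]

private lemma bih_trans {f x y z : α} (h1 : f ≤ x ⇔ y) (h2 : f ≤ y ⇔ z) : f ≤ x ⇔ z := by
  rw [le_bihimp_iff'] at h1 h2 ⊢
  constructor
  · calc f ⊓ x ≤ f ⊓ (f ⊓ x) := le_inf inf_le_left le_rfl
    _ ≤ f ⊓ y := inf_le_inf_left _ h1.1
    _ ≤ z := h2.1
  · calc f ⊓ z ≤ f ⊓ (f ⊓ z) := le_inf inf_le_left le_rfl
    _ ≤ f ⊓ y := inf_le_inf_left _ h2.2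
    _ ≤ x := h1.2

private lemma bih_inf {f x y z w : α} (h1 : f ≤ x ⇔ y) (h2 : f ≤ z ⇔ w) :
    f ≤ (x ⊓ z) ⇔ (y ⊓ w) := by
  rw [le_bihimp_iff'] at h1 h2 ⊢
  constructor
  · exact le_inf ((inf_le_inf_left f (inf_le_left (b := z))).trans h1.1)
      ((inf_le_inf_left f (inf_le_right (a := x))).trans h2.1)
  · exact le_inf ((inf_le_inf_left f (inf_le_left (b := w))).trans h1.2)
      ((inf_le_inf_left f (inf_le_right (a := y))).trans h2.2)

private lemma bih_sup {f x y z w : α} (h1 : f ≤ x ⇔ y) (h2 : f ≤ z ⇔ w) :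
    f ≤ (x ⊔ z) ⇔ (y ⊔ w) := by
  rw [le_bihimp_iff'] at h1 h2 ⊢
  constructor
  · rw [inf_sup_left]
    exact sup_le (h1.1.trans le_sup_left) (h2.1.trans le_sup_right)
  · rw [inf_sup_left]
    exact sup_le (h1.2.trans le_sup_left) (h2.2.trans le_sup_right)

private lemma bih_himp_half {f x y z w : α} (h1 : f ≤ x ⇔ y) (h2 : f ≤ z ⇔ w) :
    f ⊓ (x ⇨ z) ≤ y ⇨ w := by
  rw [le_bihimp_iff'] at h1 h2
  rw [le_himp_iff]
  calc f ⊓ (x ⇨ z) ⊓ y ≤ (f ⊓ (x ⇨ z)) ⊓ (f ⊓ y) :=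
        le_inf inf_le_left (le_inf (inf_le_left.trans inf_le_left) inf_le_right)
    _ ≤ (f ⊓ (x ⇨ z)) ⊓ x := inf_le_inf_left _ h1.2
    _ ≤ f ⊓ ((x ⇨ z) ⊓ x) := by rw [inf_assoc]
    _ ≤ f ⊓ z := inf_le_inf_left _ (by rw [inf_comm]; exact inf_himp_le)
    _ ≤ w := h2.1

private lemma bih_himp {f x y z w : α} (h1 : f ≤ x ⇔ y) (h2 : f ≤ z ⇔ w) :
    f ≤ (x ⇨ z) ⇔ (y ⇨ w) := by
  rw [le_bihimp_iff']
  exact ⟨bih_himp_half h1 h2, bih_himp_half (bihimp_comm x y ▸ h1) (bihimp_comm z w ▸ h2)⟩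

private lemma eq_of_top_le_bihimp {x y : α} (h : (⊤ : α) ≤ x ⇔ y) : x = y := by
  rw [le_bihimp_iff'] at h
  exact le_antisymm (le_of_eq_of_le (top_inf_eq x).symm h.1)
    (le_of_eq_of_le (top_inf_eq y).symm h.2)

end Aux

section Quot

variable {B C₁ C₂ : Type*} [HeytingAlgebra B] [HeytingAlgebra C₁] [HeytingAlgebra C₂]
variable (p₁ : HeytingHom B C₁) (e₂ : HeytingHom B C₂)

/-- The congruence on `C₂` generated by the image under `e₂` of the kernel of `p₁`. -/
def HRel (x y : C₂) : Prop := ∃ b : B, p₁ b = ⊤ ∧ e₂ b ≤ x ⇔ y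

lemma HRel.refl (x : C₂) : HRel p₁ e₂ x x :=
  ⟨⊤, map_top p₁, by rw [bihimp_self]; exact le_top⟩

lemma HRel.symm {x y : C₂} (h : HRel p₁ e₂ x y) : HRel p₁ e₂ y x := by
  obtain ⟨b, hb, hle⟩ := h
  exact ⟨b, hb, by rwa [bihimp_comm]⟩

lemma HRel.trans {x y z : C₂} (h1 : HRel p₁ e₂ x y) (h2 : HRel p₁ e₂ y z) : HRel p₁ e₂ x z := by
  obtain ⟨b, hb, hle⟩ := h1
  obtain ⟨b', hb', hle'⟩ := h2
  refine ⟨b ⊓ b', by rw [map_inf, hb, hb', inf_idem], ?_⟩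
  rw [map_inf]
  exact bih_trans (inf_le_left.trans hle) (inf_le_right.trans hle')

def relSetoid : Setoid C₂ :=
  ⟨HRel p₁ e₂, fun {x} => HRel.refl p₁ e₂ x, HRel.symm p₁ e₂, HRel.trans p₁ e₂⟩

/-- The quotient of `C₂` by the congruence. -/
def Quot2 : Type _ := Quotient (relSetoid p₁ e₂)

variable {p₁ e₂}

def mk2 (x : C₂) : Quot2 p₁ e₂ := Quotient.mk (relSetoid p₁ e₂) x

lemma mk2_surjective : Function.Surjective (mk2 (p₁ := p₁) (e₂ := e₂)) :=
  fun q => ⟨q.out, q.out_eq⟩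

lemma mk2_eq_iff {x y : C₂} : (mk2 x : Quot2 p₁ e₂) = mk2 y ↔ HRel p₁ e₂ x y :=
  ⟨Quotient.exact, fun h => Quot.sound h⟩

lemma rel_of_eq {b b' : B} (h : p₁ b = p₁ b') : HRel p₁ e₂ (e₂ b) (e₂ b') := by
  refine ⟨b ⇔ b', ?_, (map_bihimp e₂ b b').le⟩
  rw [map_bihimp, h, bihimp_self]

lemma HRel.inf {x y z w : C₂} (h1 : HRel p₁ e₂ x y) (h2 : HRel p₁ e₂ z w) :
    HRel p₁ e₂ (x ⊓ z) (y ⊓ w) := by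
  obtain ⟨b, hb, hle⟩ := h1
  obtain ⟨b', hb', hle'⟩ := h2
  exact ⟨b ⊓ b', by rw [map_inf, hb, hb', inf_idem],
    by rw [map_inf]; exact bih_inf (inf_le_left.trans hle) (inf_le_right.trans hle')⟩

lemma HRel.sup {x y z w : C₂} (h1 : HRel p₁ e₂ x y) (h2 : HRel p₁ e₂ z w) :
    HRel p₁ e₂ (x ⊔ z) (y ⊔ w) := by
  obtain ⟨b, hb, hle⟩ := h1
  obtain ⟨b', hb', hle'⟩ := h2
  exact ⟨b ⊓ b', by rw [map_inf, hb, hb', inf_idem],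
    by rw [map_inf]; exact bih_sup (inf_le_left.trans hle) (inf_le_right.trans hle')⟩

lemma HRel.himp {x y z w : C₂} (h1 : HRel p₁ e₂ x y) (h2 : HRel p₁ e₂ z w) :
    HRel p₁ e₂ (x ⇨ z) (y ⇨ w) := by
  obtain ⟨b, hb, hle⟩ := h1
  obtain ⟨b', hb', hle'⟩ := h2
  exact ⟨b ⊓ b', by rw [map_inf, hb, hb', inf_idem],
    by rw [map_inf]; exact bih_himp (inf_le_left.trans hle) (inf_le_right.trans hle')⟩

instance : Min (Quot2 p₁ e₂) :=
  ⟨Quotient.map₂ (· ⊓ ·) fun _ _ h _ _ h' => HRel.inf h h'⟩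

instance : Max (Quot2 p₁ e₂) :=
  ⟨Quotient.map₂ (· ⊔ ·) fun _ _ h _ _ h' => HRel.sup h h'⟩

instance : HImp (Quot2 p₁ e₂) :=
  ⟨Quotient.map₂ (· ⇨ ·) fun _ _ h _ _ h' => HRel.himp h h'⟩

instance : Top (Quot2 p₁ e₂) := ⟨mk2 ⊤⟩
instance : Bot (Quot2 p₁ e₂) := ⟨mk2 ⊥⟩

@[simp] lemma mk2_inf (x y : C₂) : (mk2 x ⊓ mk2 y : Quot2 p₁ e₂) = mk2 (x ⊓ y) := rfl
@[simp] lemma mk2_sup (x y : C₂) : (mk2 x ⊔ mk2 y : Quot2 p₁ e₂) = mk2 (x ⊔ y) := rfl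
@[simp] lemma mk2_himp (x y : C₂) : (mk2 x ⇨ mk2 y : Quot2 p₁ e₂) = mk2 (x ⇨ y) := rfl

instance : Lattice (Quot2 p₁ e₂) :=
  Lattice.mk'
    (fun a b => by
      obtain ⟨x, rfl⟩ := mk2_surjective a; obtain ⟨y, rfl⟩ := mk2_surjective b
      simp [sup_comm])
    (fun a b c => by
      obtain ⟨x, rfl⟩ := mk2_surjective a; obtain ⟨y, rfl⟩ := mk2_surjective b
      obtain ⟨z, rfl⟩ := mk2_surjective c
      simp [sup_assoc])
    (fun a b => by
      obtain ⟨x, rfl⟩ := mk2_surjective a; obtain ⟨y, rfl⟩ := mk2_surjective b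
      simp [inf_comm])
    (fun a b c => by
      obtain ⟨x, rfl⟩ := mk2_surjective a; obtain ⟨y, rfl⟩ := mk2_surjective b
      obtain ⟨z, rfl⟩ := mk2_surjective c
      simp [inf_assoc])
    (fun a b => by
      obtain ⟨x, rfl⟩ := mk2_surjective a; obtain ⟨y, rfl⟩ := mk2_surjective b
      simp)
    (fun a b => by
      obtain ⟨x, rfl⟩ := mk2_surjective a; obtain ⟨y, rfl⟩ := mk2_surjective b
      simp)

lemma mk2_le_iff {x y : C₂} :
    (mk2 x : Quot2 p₁ e₂) ≤ mk2 y ↔ ∃ b : B, p₁ b = ⊤ ∧ e₂ b ⊓ x ≤ y := by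
  rw [← sup_eq_right]; erw [mk2_sup]; rw [mk2_eq_iff]
  constructor
  · rintro ⟨b, hb, hle⟩
    rw [le_bihimp_iff'] at hle
    exact ⟨b, hb, (inf_le_inf_left _ le_sup_left).trans hle.1⟩
  · rintro ⟨b, hb, hle⟩
    refine ⟨b, hb, le_bihimp_iff'.mpr ⟨?_, ?_⟩⟩
    · rw [inf_sup_left]
      exact sup_le hle inf_le_right
    · exact inf_le_right.trans le_sup_right

instance : HeytingAlgebra (Quot2 p₁ e₂) where
  le_top a := by
    obtain ⟨x, rfl⟩ := mk2_surjective a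
    show (mk2 x : Quot2 p₁ e₂) ≤ mk2 ⊤
    rw [mk2_le_iff]
    exact ⟨⊤, map_top p₁, le_top⟩
  bot_le a := by
    obtain ⟨x, rfl⟩ := mk2_surjective a
    show (mk2 ⊥ : Quot2 p₁ e₂) ≤ mk2 x
    rw [mk2_le_iff]
    exact ⟨⊤, map_top p₁, inf_le_of_right_le bot_le⟩
  le_himp_iff a b c := by
    obtain ⟨x, rfl⟩ := mk2_surjective a; obtain ⟨y, rfl⟩ := mk2_surjective b
    obtain ⟨z, rfl⟩ := mk2_surjective c
    rw [mk2_himp]; erw [mk2_inf]; rw [mk2_le_iff, mk2_le_iff]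
    constructor
    · rintro ⟨b, hb, hle⟩
      refine ⟨b, hb, ?_⟩
      rw [← inf_assoc]
      exact le_himp_iff.mp hle
    · rintro ⟨b, hb, hle⟩
      refine ⟨b, hb, le_himp_iff.mpr ?_⟩
      rwa [inf_assoc]
  compl a := a ⇨ ⊥
  himp_bot a := rfl

/-- The quotient map as a Heyting homomorphism. -/
def mk2Hom : HeytingHom C₂ (Quot2 p₁ e₂) where
  toFun := mk2
  map_sup' _ _ := rfl
  map_inf' _ _ := rfl
  map_himp' _ _ := rfl
  map_bot' := rfl

variable {A : Type*} [HeytingAlgebra A]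

/-- The embedding `A → Quot2 p₁ e₂` induced by an embedding `e₁ : A → C₁` and the
surjectivity of `p₁`. -/
noncomputable def embHom (hp₁ : Function.Surjective p₁) (e₁ : HeytingHom A C₁) :
    HeytingHom A (Quot2 p₁ e₂) :=
  letI g : C₁ → B := Function.surjInv hp₁
  haveI hg : ∀ c, p₁ (g c) = c := Function.surjInv_eq hp₁
  haveI key : ∀ b b' : B, p₁ b = p₁ b' → (mk2 (e₂ b) : Quot2 p₁ e₂) = mk2 (e₂ b') :=
    fun _ _ h => mk2_eq_iff.mpr (rel_of_eq h)
  { toFun := fun a => mk2 (e₂ (g (e₁ a)))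
    map_sup' := fun a a' => by
      erw [mk2_sup]; rw [← map_sup]
      exact key _ _ (by simp [hg, map_sup])
    map_inf' := fun a a' => by
      erw [mk2_inf]; rw [← map_inf]
      exact key _ _ (by simp [hg, map_inf])
    map_himp' := fun a a' => by
      rw [mk2_himp, ← map_himp]
      exact key _ _ (by simp [hg, map_himp])
    map_bot' := by
      show mk2 (e₂ (g (e₁ ⊥))) = mk2 ⊥
      rw [← map_bot e₂]
      exact key _ _ (by simp [hg]) }

lemma embHom_injective (hp₁ : Function.Surjective p₁) (e₁ : HeytingHom A C₁)
    (he₂ : Function.Injective e₂) (he₁ : Function.Injective e₁) :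
    Function.Injective (embHom hp₁ e₁ : A → Quot2 p₁ e₂) := by
  intro a a' h
  set g : C₁ → B := Function.surjInv hp₁ with hgdef
  have hg : ∀ c, p₁ (g c) = c := Function.surjInv_eq hp₁
  have h' : (mk2 (e₂ (g (e₁ a))) : Quot2 p₁ e₂) = mk2 (e₂ (g (e₁ a'))) := h
  obtain ⟨f, hf, hle⟩ := mk2_eq_iff.mp h'
  set b := g (e₁ a)
  set b' := g (e₁ a')
  have h2 : e₂ (f ⊓ (b ⇔ b')) = e₂ f := by
    rw [map_inf, map_bihimp]
    exact inf_eq_left.mpr hle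
  have hle2 : f ≤ b ⇔ b' := inf_eq_left.mp (he₂ h2)
  have htop : (⊤ : C₁) ≤ e₁ a ⇔ e₁ a' := by
    calc (⊤ : C₁) = p₁ f := hf.symm
      _ ≤ p₁ (b ⇔ b') := OrderHomClass.mono p₁ hle2
      _ = e₁ a ⇔ e₁ a' := by rw [map_bihimp, hg, hg]
  exact he₁ (eq_of_top_le_bihimp htop)

end Quot

section Shrinking

universe w

variable {γ : Type*} [HeytingAlgebra γ] [Small.{w} γ]

noncomputable instance : Max (Shrink.{w} γ) :=
  ⟨fun x y => equivShrink γ ((equivShrink γ).symm x ⊔ (equivShrink γ).symm y)⟩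
noncomputable instance : Min (Shrink.{w} γ) :=
  ⟨fun x y => equivShrink γ ((equivShrink γ).symm x ⊓ (equivShrink γ).symm y)⟩
noncomputable instance : HImp (Shrink.{w} γ) :=
  ⟨fun x y => equivShrink γ ((equivShrink γ).symm x ⇨ (equivShrink γ).symm y)⟩
noncomputable instance : Compl (Shrink.{w} γ) :=
  ⟨fun x => equivShrink γ ((equivShrink γ).symm x)ᶜ⟩
noncomputable instance : Top (Shrink.{w} γ) := ⟨equivShrink γ ⊤⟩
noncomputable instance : Bot (Shrink.{w} γ) := ⟨equivShrink γ ⊥⟩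

noncomputable instance : HeytingAlgebra (Shrink.{w} γ) :=
  Function.Injective.heytingAlgebra (equivShrink γ).symm (equivShrink γ).symm.injective
    Iff.rfl Iff.rfl
    (fun _ _ => (equivShrink γ).symm_apply_apply _)
    (fun _ _ => (equivShrink γ).symm_apply_apply _)
    ((equivShrink γ).symm_apply_apply _)
    ((equivShrink γ).symm_apply_apply _)
    (fun _ => (equivShrink γ).symm_apply_apply _)
    (fun _ _ => (equivShrink γ).symm_apply_apply _)

/-- `equivShrink` as a Heyting homomorphism. -/
noncomputable def shrinkHom : HeytingHom γ (Shrink.{w} γ) where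
  toFun := equivShrink γ
  map_sup' a b := by
    show _ = equivShrink γ ((equivShrink γ).symm _ ⊔ (equivShrink γ).symm _)
    simp
  map_inf' a b := by
    show _ = equivShrink γ ((equivShrink γ).symm _ ⊓ (equivShrink γ).symm _)
    simp
  map_himp' a b := by
    show _ = equivShrink γ ((equivShrink γ).symm _ ⇨ (equivShrink γ).symm _)
    simp
  map_bot' := rfl

lemma shrinkHom_bijective : Function.Bijective (shrinkHom : γ → Shrink.{w} γ) :=
  (equivShrink γ).bijective

end Shrinking

universe w in
theorem stmt_18_aux {A B D : Type} [HeytingAlgebra A] [HeytingAlgebra B] [HeytingAlgebra D]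
    (hAB : ∃ (C : HeytAlg) (p : HeytingHom B ↥C) (e : HeytingHom A ↥C),
      Function.Surjective p ∧ Function.Injective e)
    (hBD : ∃ (C : HeytAlg) (p : HeytingHom D ↥C) (e : HeytingHom B ↥C),
      Function.Surjective p ∧ Function.Injective e) :
    ∃ (C : HeytAlg.{w}) (p : HeytingHom D ↥C) (e : HeytingHom A ↥C),
      Function.Surjective p ∧ Function.Injective e := by
  obtain ⟨C₁, p₁, e₁, hp₁, he₁⟩ := hAB
  obtain ⟨C₂, p₂, e₂, hp₂, he₂⟩ := hBD
  haveI : Small.{w} D := ⟨⟨ULift.{w} D, ⟨Equiv.ulift.symm⟩⟩⟩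
  haveI : Small.{w} (Quot2 p₁ e₂) :=
    small_of_surjective (f := mk2 ∘ p₂) (mk2_surjective.comp hp₂)
  refine ⟨HeytAlg.of (Shrink.{w} (Quot2 p₁ e₂)),
    (shrinkHom.comp mk2Hom).comp p₂, shrinkHom.comp (embHom hp₁ e₁), ?_, ?_⟩
  · show Function.Surjective (⇑(shrinkHom (γ := Quot2 p₁ e₂)) ∘ ⇑(mk2Hom (p₁ := p₁) (e₂ := e₂)) ∘ ⇑p₂)
    exact (shrinkHom_bijective.surjective.comp mk2_surjective).comp hp₂
  · show Function.Injective (⇑(shrinkHom (γ := Quot2 p₁ e₂)) ∘ ⇑(embHom hp₁ e₁))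
    exact shrinkHom_bijective.injective.comp (embHom_injective hp₁ e₁ he₂ he₁)

/-- The relation "A embeds into some quotient of B" on Heyting algebras (there are a
Heyting algebra `C`, a surjective Heyting homomorphism `B → C` and an injective
Heyting homomorphism `A → C`) is transitive. -/
theorem stmt_18 {A B D : Type} [HeytingAlgebra A] [HeytingAlgebra B] [HeytingAlgebra D]
    (hAB : ∃ (C : HeytAlg) (p : HeytingHom B ↥C) (e : HeytingHom A ↥C),
      Function.Surjective p ∧ Function.Injective e)
    (hBD : ∃ (C : HeytAlg) (p : HeytingHom D ↥C) (e : HeytingHom B ↥C),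
      Function.Surjective p ∧ Function.Injective e) :
    ∃ (C : HeytAlg) (p : HeytingHom D ↥C) (e : HeytingHom A ↥C),
      Function.Surjective p ∧ Function.Injective e :=
  stmt_18_aux hAB hBD
end
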